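/- The common solution uᵢ = −m(γ + 1/T_c)ẋᵢ satisfies the asymmetric constraints simultaneously for all neighbors j in any finite set J, provided ‖xᵢⱼ‖ ≥ r_s for all j ∈ J; i.e., the feasible set of the agent-i QP under the proposed asymmetric weights is always nonempty. -/
import Mathlib


/-- the common input uᵢ = −m(γ + 1/T_c)ẋᵢ satisfies the
asymmetric constraints E_j(uᵢ) ≥ 0 simultaneously for all neighbors j in a
finite set J, provided ‖xᵢⱼ‖ ≥ r_s for all j ∈ J; so the agent-i QP feasible
set is nonempty. Components: xᵢⱼ = (x1 j, y1 j), ẋᵢⱼ = (vx j, vy j),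
ẋᵢ = (vi1, vi2), n j = ‖xᵢⱼ‖. -/
theorem stmt_17 {ι : Type*} (J : Finset ι) (m γ Tc rs : ℝ)
    (hm : 0 < m) (hγ : 0 < γ) (hTc : 0 < Tc) (hrs : 0 < rs)
    (x1 y1 vx vy n : ι → ℝ) (vi1 vi2 : ℝ)
    (hn : ∀ j ∈ J, n j = Real.sqrt (x1 j ^ 2 + y1 j ^ 2))
    (hsafe : ∀ j ∈ J, n j ≥ rs)
    (ui1 ui2 : ℝ)
    (hui1 : ui1 = -(m * (γ + 1 / Tc)) * vi1)
    (hui2 : ui2 = -(m * (γ + 1 / Tc)) * vi2) :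
    ∀ j ∈ J,
      -2 * (vi1 * x1 j + vi2 * y1 j) / n j
        + Tc * (y1 j * vx j - x1 j * vy j) ^ 2 / n j ^ 3
        - (2 * Tc / (m * n j)) * (x1 j * ui1 + y1 j * ui2)
        + γ * (n j - 2 * Tc * (vi1 * x1 j + vi2 * y1 j) / n j - rs) ≥ 0 := by
  intro j hj
  have hnpos : 0 < n j := lt_of_lt_of_le hrs (hsafe j hj)
  have hne : n j ≠ 0 := ne_of_gt hnpos
  have key : -2 * (vi1 * x1 j + vi2 * y1 j) / n j
        + Tc * (y1 j * vx j - x1 j * vy j) ^ 2 / n j ^ 3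
        - (2 * Tc / (m * n j)) * (x1 j * ui1 + y1 j * ui2)
        + γ * (n j - 2 * Tc * (vi1 * x1 j + vi2 * y1 j) / n j - rs)
      = Tc * (y1 j * vx j - x1 j * vy j) ^ 2 / n j ^ 3 + γ * (n j - rs) := by
    rw [hui1, hui2]; field_simp; ring
  rw [key]
  have h1 : 0 ≤ Tc * (y1 j * vx j - x1 j * vy j) ^ 2 / n j ^ 3 := by positivity
  have h2 : 0 ≤ γ * (n j - rs) := by
    have := hsafe j hj; nlinarith
  linarith
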